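/- Let 0 < p < 1, 0 < q < 1, 0 < s < 1, and define the Pauli channels E_1, E_2, E_3 on 2×2 matrices with Kraus operators {√p I, √(1−p) X}, {√q I, √(1−q) Z}, and {√s X, √(1−s) Z}, respectively. Then the supports of E_1, E_2, E_3 are pairwise non-contained in one another, and consequently E_1, E_2, E_3 can be unambiguously discriminated by three uses: there exist an ancilla dimension d_a and a unit vector ψ ∈ (ℂ²)^{⊗3} ⊗ ℂ^{d_a} such that the output states (E_i^{⊗3} ⊗ I)(|ψ⟩⟨ψ|), i = 1,2,3, are unambiguously distinguishable. -/

import Mathlib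

open Matrix Kronecker
open scoped ComplexOrder

noncomputable section

/-- A quantum operation on ℂ^d given by a finite family of Kraus operators
satisfying the completeness condition. -/
structure QuantumOp (d : ℕ) where
  m : ℕ
  K : Fin m → Matrix (Fin d) (Fin d) ℂ
  complete : ∑ k, (K k)ᴴ * K k = 1

/-- The support of a quantum operation: the span of its Kraus operators. -/
def QuantumOp.supp {d : ℕ} (E : QuantumOp d) : Submodule ℂ (Matrix (Fin d) (Fin d) ℂ) :=
  Submodule.span ℂ (Set.range E.K)

/-- The output state (E ⊗ I)(|ψ⟩⟨ψ|) = Σ_k (E^k ⊗ I)|ψ⟩⟨ψ|(E^k ⊗ I)†. -/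
def QuantumOp.output {d : ℕ} (E : QuantumOp d) (da : ℕ) (ψ : Fin d × Fin da → ℂ) :
    Matrix (Fin d × Fin da) (Fin d × Fin da) ℂ :=
  ∑ k, (E.K k ⊗ₖ (1 : Matrix (Fin da) (Fin da) ℂ)) * vecMulVec ψ (star ψ) *
    (E.K k ⊗ₖ (1 : Matrix (Fin da) (Fin da) ℂ))ᴴ

/-- States σ_1, …, σ_n are unambiguously distinguishable if there is a POVM
{Π_0, Π_1, …, Π_n} with tr(Π_i σ_j) = 0 for i ≠ j and tr(Π_i σ_i) > 0. -/
def UnambiguouslyDistinguishable {μ : Type*} [Fintype μ] [DecidableEq μ] {n : ℕ}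
    (σ : Fin n → Matrix μ μ ℂ) : Prop :=
  ∃ P0 : Matrix μ μ ℂ, ∃ P : Fin n → Matrix μ μ ℂ,
    P0.PosSemidef ∧ (∀ i, (P i).PosSemidef) ∧
    (P0 + ∑ i, P i = 1) ∧
    (∀ i j, i ≠ j → (P i * σ j).trace = 0) ∧
    (∀ i, 0 < (P i * σ i).trace)

/-- The Pauli X matrix. -/
def pauliX : Matrix (Fin 2) (Fin 2) ℂ := !![0, 1; 1, 0]

/-- The Pauli Z matrix. -/
def pauliZ : Matrix (Fin 2) (Fin 2) ℂ := !![1, 0; 0, -1]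

/-- The output state Σ_k (K_k ⊗ I)|ψ⟩⟨ψ|(K_k ⊗ I)† of the quantum operation with Kraus
operators K on the input |ψ⟩⟨ψ|, with an ancilla of dimension da. -/
def outputOf {d m da : ℕ} (K : Fin m → Matrix (Fin d) (Fin d) ℂ)
    (ψ : Fin d × Fin da → ℂ) : Matrix (Fin d × Fin da) (Fin d × Fin da) ℂ :=
  ∑ k, (K k ⊗ₖ (1 : Matrix (Fin da) (Fin da) ℂ)) * vecMulVec ψ (star ψ) *
    (K k ⊗ₖ (1 : Matrix (Fin da) (Fin da) ℂ))ᴴ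

/-- Kraus operators {√p I, √(1-p) X} of the bit-flip channel. -/
def bitFlipK (p : ℝ) : Fin 2 → Matrix (Fin 2) (Fin 2) ℂ :=
  ![(Real.sqrt p : ℂ) • 1, (Real.sqrt (1 - p) : ℂ) • pauliX]

/-- Kraus operators {√q I, √(1-q) Z} of the phase-flip channel. -/
def phaseFlipK (q : ℝ) : Fin 2 → Matrix (Fin 2) (Fin 2) ℂ :=
  ![(Real.sqrt q : ℂ) • 1, (Real.sqrt (1 - q) : ℂ) • pauliZ]

/-- Kraus operators {√s X, √(1-s) Z} of the third Pauli channel. -/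
def mixedXZK (s : ℝ) : Fin 2 → Matrix (Fin 2) (Fin 2) ℂ :=
  ![(Real.sqrt s : ℂ) • pauliX, (Real.sqrt (1 - s) : ℂ) • pauliZ]

/-- N-fold Kronecker (tensor) power of a family of matrices. -/
def krausPow {d m : ℕ} (K : Fin m → Matrix (Fin d) (Fin d) ℂ) (N : ℕ)
    (ks : Fin N → Fin m) : Matrix (Fin N → Fin d) (Fin N → Fin d) ℂ :=
  fun a b => ∏ t, K (ks t) (a t) (b t)

/-- The output state (E^{⊗N} ⊗ I)(|ψ⟩⟨ψ|) for the operation with Kraus operators K. -/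
def outputPowOf {d m : ℕ} (K : Fin m → Matrix (Fin d) (Fin d) ℂ) (N da : ℕ)
    (ψ : (Fin N → Fin d) × Fin da → ℂ) :
    Matrix ((Fin N → Fin d) × Fin da) ((Fin N → Fin d) × Fin da) ℂ :=
  ∑ ks : Fin N → Fin m,
    (krausPow K N ks ⊗ₖ (1 : Matrix (Fin da) (Fin da) ℂ)) * vecMulVec ψ (star ψ) *
      (krausPow K N ks ⊗ₖ (1 : Matrix (Fin da) (Fin da) ℂ))ᴴ

set_option linter.unusedSectionVars false
set_option linter.unusedTactic false
set_option maxHeartbeats 1000000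
section ThreePauliAux
abbrev Mat2 := Matrix (Fin 2) (Fin 2) ℂ
variable {μ : Type*} [Fintype μ] [DecidableEq μ]

lemma mul_vecMulVec_mul (M : Matrix μ μ ℂ) (v : μ → ℂ) :
    M * vecMulVec v (star v) * Mᴴ = vecMulVec (M *ᵥ v) (star (M *ᵥ v)) := by
  ext i j
  simp only [Matrix.mul_apply, vecMulVec_apply, conjTranspose_apply, Pi.star_apply,
    Matrix.mulVec, dotProduct, star_sum, star_mul', Finset.sum_mul, Finset.mul_sum, star_star]
  refine Finset.sum_congr rfl fun k _ => Finset.sum_congr rfl fun l _ => by ring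

lemma vecMulVec_mul_vecMulVec (a b u v : μ → ℂ) :
    vecMulVec a b * vecMulVec u v = (b ⬝ᵥ u) • vecMulVec a v := by
  ext i j
  simp only [Matrix.mul_apply, vecMulVec_apply, Matrix.smul_apply, dotProduct, smul_eq_mul,
    Finset.sum_mul]
  refine Finset.sum_congr rfl fun k _ => by ring

lemma trace_vecMulVec_mul (a b u v : μ → ℂ) :
    (vecMulVec a b * vecMulVec u v).trace = (b ⬝ᵥ u) * (v ⬝ᵥ a) := by
  rw [_root_.vecMulVec_mul_vecMulVec, Matrix.trace_smul]
  simp only [Matrix.trace, Matrix.diag, vecMulVec_apply, dotProduct, smul_eq_mul,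
    Finset.mul_sum]
  refine Finset.sum_congr rfl fun i _ => by ring

lemma vecMulVec_posSemidef (v : μ → ℂ) : (vecMulVec v (star v)).PosSemidef := by
  rw [Matrix.posSemidef_iff_dotProduct_mulVec]
  constructor
  · ext i j
    simp [conjTranspose_apply, vecMulVec_apply, mul_comm]
  · intro x
    have h : star x ⬝ᵥ (vecMulVec v (star v) *ᵥ x) = star (star v ⬝ᵥ x) * (star v ⬝ᵥ x) := by
      simp only [Matrix.mulVec, dotProduct, vecMulVec_apply, Pi.star_apply, star_sum, star_mul',
        star_star, Finset.sum_mul, Finset.mul_sum]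
      rw [Finset.sum_comm]
      refine Finset.sum_congr rfl fun k _ => Finset.sum_congr rfl fun l _ => by ring
    rw [h]
    exact star_mul_self_nonneg _

lemma conj_dot (a b : μ → ℂ) : star b ⬝ᵥ a = starRingEnd ℂ (star a ⬝ᵥ b) := by
  simp only [dotProduct, map_sum, Pi.star_apply]
  refine Finset.sum_congr rfl fun k _ => ?_
  rw [RingHom.map_mul]
  simp [mul_comm]

lemma trace_krausPow_pair {m m' N : ℕ} (A : Fin m → Mat2) (B : Fin m' → Mat2)
    (as : Fin N → Fin m) (bs : Fin N → Fin m') :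
    ((krausPow A N as)ᴴ * krausPow B N bs).trace
      = ∏ t, ((A (as t))ᴴ * B (bs t)).trace := by
  have tr2 : ∀ (M M' : Mat2), (Mᴴ * M').trace
      = ∑ uv : Fin 2 × Fin 2, star (M uv.1 uv.2) * M' uv.1 uv.2 := by
    intro M M'
    rw [Fintype.sum_prod_type]
    simp [Matrix.trace, Matrix.diag, Matrix.mul_apply, conjTranspose_apply, Fin.sum_univ_two]
    ring
  calc ((krausPow A N as)ᴴ * krausPow B N bs).trace
      = ∑ x : Fin N → Fin 2, ∑ y : Fin N → Fin 2,
          ∏ t, (star (A (as t) (y t) (x t)) * B (bs t) (y t) (x t)) := by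
        simp only [Matrix.trace, Matrix.diag, Matrix.mul_apply, conjTranspose_apply, krausPow]
        refine Finset.sum_congr rfl fun x _ => Finset.sum_congr rfl fun y _ => ?_
        rw [star_prod, ← Finset.prod_mul_distrib]
    _ = ∑ p : (Fin N → Fin 2) × (Fin N → Fin 2),
          ∏ t, (star (A (as t) (p.2 t) (p.1 t)) * B (bs t) (p.2 t) (p.1 t)) :=
        by rw [Fintype.sum_prod_type]
    _ = ∑ g : Fin N → Fin 2 × Fin 2,
          ∏ t, (star (A (as t) ((g t).2) ((g t).1)) * B (bs t) ((g t).2) ((g t).1)) := by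
        rw [← Equiv.sum_comp (Equiv.arrowProdEquivProdArrow (Fin N) (fun _ => Fin 2) (fun _ => Fin 2))
          (fun p => ∏ t, (star (A (as t) (p.2 t) (p.1 t)) * B (bs t) (p.2 t) (p.1 t)))]
        rfl
    _ = ∏ t, ∑ uv : Fin 2 × Fin 2,
          (star (A (as t) uv.2 uv.1) * B (bs t) uv.2 uv.1) := by
        rw [Finset.prod_univ_sum, Fintype.piFinset_univ]
    _ = ∏ t, ((A (as t))ᴴ * B (bs t)).trace := by
        refine Finset.prod_congr rfl fun t _ => ?_
        rw [tr2]
        exact Fintype.sum_equiv (Equiv.prodComm _ _) _ _ (fun uv => rfl)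

lemma krausPow_smul {m N : ℕ} (c : Fin m → ℂ) (P : Fin m → Mat2) (ks : Fin N → Fin m) :
    krausPow (fun k => c k • P k) N ks = (∏ t, c (ks t)) • krausPow P N ks := by
  ext a b
  simp [krausPow, Matrix.smul_apply, smul_eq_mul, Finset.prod_mul_distrib]

-- vectorization setup
def e8 : (Fin 3 → Fin 2) ≃ Fin 8 := Fintype.equivFinOfCardEq (by simp)
def cc : ℝ := (Real.sqrt 8)⁻¹
lemma cc_pos : 0 < cc := by
  unfold cc; positivity
lemma cc_sq : (cc:ℂ)^2 = (8:ℂ)⁻¹ := by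
  have : cc^2 = 8⁻¹ := by
    rw [cc, ← Real.sqrt_inv]
    exact Real.sq_sqrt (by norm_num)
  rw [show ((cc:ℂ))^2 = ((cc^2 : ℝ) : ℂ) by push_cast; ring, this]
  norm_num
def ψ0 : (Fin 3 → Fin 2) × Fin 8 → ℂ := fun za => if e8 za.1 = za.2 then (cc : ℂ) else 0
def vecOf (A : Matrix (Fin 3 → Fin 2) (Fin 3 → Fin 2) ℂ) : (Fin 3 → Fin 2) × Fin 8 → ℂ :=
  fun za => (cc : ℂ) * A za.1 (e8.symm za.2)

lemma psi0_norm : star ψ0 ⬝ᵥ ψ0 = 1 := by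
  simp only [dotProduct, Pi.star_apply, ψ0]
  rw [Fintype.sum_prod_type]
  have : ∀ x : Fin 3 → Fin 2, (∑ a : Fin 8,
      star (if e8 x = a then (cc:ℂ) else 0) * (if e8 x = a then (cc:ℂ) else 0))
      = star (cc:ℂ) * (cc:ℂ) := by
    intro x
    rw [Finset.sum_eq_single (e8 x)]
    · simp
    · intro b _ hb; simp [Ne.symm hb]
    · simp
  rw [Finset.sum_congr rfl (fun x _ => this x)]
  simp only [Finset.sum_const, Finset.card_univ, nsmul_eq_mul]
  have hc : star (cc:ℂ) * (cc:ℂ) = ((cc:ℝ)^2 : ℂ) := by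
    rw [Complex.star_def, Complex.conj_ofReal]
    push_cast; ring
  rw [hc, cc_sq]
  norm_num [show (Fintype.card (Fin 3 → Fin 2) : ℂ) = 8 by simp]

lemma trace_herm_mul (A B : Matrix (Fin 3 → Fin 2) (Fin 3 → Fin 2) ℂ) :
    (Aᴴ * B).trace = ∑ x : Fin 3 → Fin 2, ∑ y : Fin 3 → Fin 2, star (A y x) * B y x := by
  simp [Matrix.trace, Matrix.diag, Matrix.mul_apply, conjTranspose_apply]

lemma star_cc_mul : star ((cc:ℂ)) = (cc:ℂ) := by
  rw [Complex.star_def, Complex.conj_ofReal]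

lemma kron_mulVec (B : Matrix (Fin 3 → Fin 2) (Fin 3 → Fin 2) ℂ) (y : Fin 3 → Fin 2) (a : Fin 8) :
    ((B ⊗ₖ (1 : Matrix (Fin 8) (Fin 8) ℂ)) *ᵥ ψ0) (y, a) = (cc:ℂ) * B y (e8.symm a) := by
  simp only [Matrix.mulVec, dotProduct]
  rw [Fintype.sum_prod_type]
  have inner : ∀ x, (∑ b : Fin 8,
      (B ⊗ₖ (1 : Matrix (Fin 8) (Fin 8) ℂ)) (y,a) (x,b) * ψ0 (x,b))
      = B y x * (if x = e8.symm a then (cc:ℂ) else 0) := by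
    intro x
    rw [Finset.sum_eq_single a]
    · simp only [kroneckerMap_apply, Matrix.one_apply_eq, mul_one, ψ0]
      congr 1
      rw [if_congr (Equiv.apply_eq_iff_eq_symm_apply e8) rfl rfl]
    · intro b _ hb
      simp [kroneckerMap_apply, Matrix.one_apply, Ne.symm hb]
    · simp
  rw [Finset.sum_congr rfl (fun x _ => inner x)]
  rw [Finset.sum_eq_single (e8.symm a)]
  · simp [mul_comm]
  · intro x _ hx; simp [hx]
  · simp

lemma pairing (A B : Matrix (Fin 3 → Fin 2) (Fin 3 → Fin 2) ℂ) :
    star (vecOf A) ⬝ᵥ ((B ⊗ₖ (1 : Matrix (Fin 8) (Fin 8) ℂ)) *ᵥ ψ0)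
      = (cc:ℂ)^2 * (Aᴴ * B).trace := by
  simp only [dotProduct, Pi.star_apply]
  rw [Fintype.sum_prod_type]
  have step : ∀ y : Fin 3 → Fin 2, ∀ a : Fin 8,
      star (vecOf A (y,a)) * ((B ⊗ₖ (1 : Matrix (Fin 8) (Fin 8) ℂ)) *ᵥ ψ0) (y, a)
      = (cc:ℂ)^2 * (star (A y (e8.symm a)) * B y (e8.symm a)) := by
    intro y a
    rw [kron_mulVec]
    simp only [vecOf, star_mul', star_cc_mul]
    ring
  rw [Finset.sum_congr rfl (fun y _ => Finset.sum_congr rfl (fun a _ => step y a))]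
  have reidx : ∀ y : Fin 3 → Fin 2, (∑ a : Fin 8,
      (cc:ℂ)^2 * (star (A y (e8.symm a)) * B y (e8.symm a)))
      = ∑ x : Fin 3 → Fin 2, (cc:ℂ)^2 * (star (A y x) * B y x) :=
    fun y => Equiv.sum_comp e8.symm (fun x => (cc:ℂ)^2 * (star (A y x) * B y x))
  rw [Finset.sum_congr rfl (fun y _ => reidx y)]
  rw [trace_herm_mul, Finset.mul_sum]
  rw [Finset.sum_comm]
  exact Finset.sum_congr rfl fun x _ => by rw [Finset.mul_sum]

lemma pairingVec (A B : Matrix (Fin 3 → Fin 2) (Fin 3 → Fin 2) ℂ) :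
    star (vecOf A) ⬝ᵥ vecOf B = (cc:ℂ)^2 * (Aᴴ * B).trace := by
  simp only [dotProduct, Pi.star_apply]
  rw [Fintype.sum_prod_type]
  have step : ∀ y : Fin 3 → Fin 2, ∀ a : Fin 8,
      star (vecOf A (y,a)) * vecOf B (y,a)
      = (cc:ℂ)^2 * (star (A y (e8.symm a)) * B y (e8.symm a)) := by
    intro y a
    simp only [vecOf, star_mul', star_cc_mul]
    ring
  rw [Finset.sum_congr rfl (fun y _ => Finset.sum_congr rfl (fun a _ => step y a))]
  have reidx : ∀ y : Fin 3 → Fin 2, (∑ a : Fin 8,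
      (cc:ℂ)^2 * (star (A y (e8.symm a)) * B y (e8.symm a)))
      = ∑ x : Fin 3 → Fin 2, (cc:ℂ)^2 * (star (A y x) * B y x) :=
    fun y => Equiv.sum_comp e8.symm (fun x => (cc:ℂ)^2 * (star (A y x) * B y x))
  rw [Finset.sum_congr rfl (fun y _ => reidx y)]
  rw [trace_herm_mul, Finset.mul_sum]
  rw [Finset.sum_comm]
  exact Finset.sum_congr rfl fun x _ => by rw [Finset.mul_sum]

def pf : Fin 3 → Mat2 := ![1, pauliX, pauliZ]

lemma tau : ∀ i j : Fin 3, ((pf i)ᴴ * pf j).trace = if i = j then 2 else 0 := by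
  intro i j
  fin_cases i <;> fin_cases j <;>
    (simp [pf, pauliX, pauliZ, Matrix.trace_fin_two, Matrix.mul_apply, Fin.sum_univ_two,
      Matrix.conjTranspose_apply, Matrix.one_apply]; try norm_num)

lemma tau_ne {a b : Fin 3} (h : a ≠ b) : ((pf a)ᴴ * pf b).trace = 0 := by
  rw [tau]; simp [h]

lemma zval_eq (co : Fin 2 → ℝ) (id2 : Fin 2 → Fin 3) (v : Fin 3 → Fin 3) (ks : Fin 3 → Fin 2) :
    star (vecOf (krausPow pf 3 v)) ⬝ᵥ
      ((krausPow (fun k => ((co k : ℝ) : ℂ) • pf (id2 k)) 3 ks ⊗ₖ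
        (1 : Matrix (Fin 8) (Fin 8) ℂ)) *ᵥ ψ0)
    = (cc:ℂ)^2 * (∏ t, ((co (ks t) : ℝ) : ℂ)) *
        ∏ t, ((pf (v t))ᴴ * pf (id2 (ks t))).trace := by
  rw [krausPow_smul]
  rw [show krausPow (fun k => pf (id2 k)) 3 ks = krausPow pf 3 (fun t => id2 (ks t)) from rfl]
  rw [Matrix.smul_kronecker, smul_mulVec, dotProduct_smul, pairing, trace_krausPow_pair]
  simp only [smul_eq_mul]; ring

lemma trace_P_output (φ : (Fin 3 → Fin 2) × Fin 8 → ℂ) (K : Fin 2 → Mat2) :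
    (vecMulVec φ (star φ) * outputPowOf K 3 8 ψ0).trace
      = ∑ ks : Fin 3 → Fin 2,
          (star φ ⬝ᵥ ((krausPow K 3 ks ⊗ₖ (1:Matrix (Fin 8) (Fin 8) ℂ)) *ᵥ ψ0)) *
          starRingEnd ℂ
            (star φ ⬝ᵥ ((krausPow K 3 ks ⊗ₖ (1:Matrix (Fin 8) (Fin 8) ℂ)) *ᵥ ψ0)) := by
  unfold outputPowOf
  rw [Matrix.mul_sum, Matrix.trace_sum]
  refine Finset.sum_congr rfl fun ks _ => ?_
  rw [mul_vecMulVec_mul, trace_vecMulVec_mul]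
  rw [conj_dot φ]

lemma offdiag_zero (co : Fin 2 → ℝ) (id2 : Fin 2 → Fin 3) (v : Fin 3 → Fin 3)
    (t0 : Fin 3) (h : ∀ k, ((pf (v t0))ᴴ * pf (id2 k)).trace = 0) :
    (vecMulVec (vecOf (krausPow pf 3 v)) (star (vecOf (krausPow pf 3 v))) *
      outputPowOf (fun k => ((co k : ℝ):ℂ) • pf (id2 k)) 3 8 ψ0).trace = 0 := by
  rw [trace_P_output]
  refine Finset.sum_eq_zero fun ks _ => ?_
  have h0 : ∏ t, ((pf (v t))ᴴ * pf (id2 (ks t))).trace = 0 :=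
    Finset.prod_eq_zero (Finset.mem_univ t0) (h (ks t0))
  rw [zval_eq, h0, mul_zero]
  simp

lemma diag_pos (co : Fin 2 → ℝ) (hco : ∀ k, 0 < co k) (id2 : Fin 2 → Fin 3)
    (v : Fin 3 → Fin 3) (ks0 : Fin 3 → Fin 2) (h : ∀ t, id2 (ks0 t) = v t) :
    0 < (vecMulVec (vecOf (krausPow pf 3 v)) (star (vecOf (krausPow pf 3 v))) *
      outputPowOf (fun k => ((co k : ℝ):ℂ) • pf (id2 k)) 3 8 ψ0).trace := by
  rw [trace_P_output]
  have key : ∀ ks : Fin 3 → Fin 2,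
      (star (vecOf (krausPow pf 3 v)) ⬝ᵥ
        ((krausPow (fun k => ((co k : ℝ):ℂ) • pf (id2 k)) 3 ks ⊗ₖ
          (1:Matrix (Fin 8) (Fin 8) ℂ)) *ᵥ ψ0)) *
      starRingEnd ℂ (star (vecOf (krausPow pf 3 v)) ⬝ᵥ
        ((krausPow (fun k => ((co k : ℝ):ℂ) • pf (id2 k)) 3 ks ⊗ₖ
          (1:Matrix (Fin 8) (Fin 8) ℂ)) *ᵥ ψ0))
      = ((Complex.normSq (star (vecOf (krausPow pf 3 v)) ⬝ᵥ
        ((krausPow (fun k => ((co k : ℝ):ℂ) • pf (id2 k)) 3 ks ⊗ₖ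
          (1:Matrix (Fin 8) (Fin 8) ℂ)) *ᵥ ψ0)) : ℝ) : ℂ) := fun ks => Complex.mul_conj _
  rw [Finset.sum_congr rfl (fun ks _ => key ks), ← Complex.ofReal_sum]
  rw [Complex.zero_lt_real]
  refine Finset.sum_pos' (fun ks _ => Complex.normSq_nonneg _) ⟨ks0, Finset.mem_univ _, ?_⟩
  rw [Complex.normSq_pos, zval_eq]
  refine mul_ne_zero (mul_ne_zero ?_ ?_) ?_
  · exact pow_ne_zero _ (Complex.ofReal_ne_zero.2 (ne_of_gt cc_pos))
  · exact Finset.prod_ne_zero_iff.2 fun t _ => Complex.ofReal_ne_zero.2 (ne_of_gt (hco _))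
  · rw [Finset.prod_congr rfl (fun t _ => by rw [h t, tau, if_pos rfl])]
    norm_num

lemma phi_orth : ∀ i j : Fin 3,
    star (vecOf (krausPow pf 3 ((![![1,1,0],![2,2,0],![1,2,2]] : Fin 3 → Fin 3 → Fin 3) i))) ⬝ᵥ
      vecOf (krausPow pf 3 ((![![1,1,0],![2,2,0],![1,2,2]] : Fin 3 → Fin 3 → Fin 3) j))
      = if i = j then 1 else 0 := by
  intro i j
  rw [pairingVec, trace_krausPow_pair]
  rw [Finset.prod_congr rfl (fun t _ => tau _ _)]
  fin_cases i <;> fin_cases j <;>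
    simp [Fin.prod_univ_three, cc_sq] <;> norm_num

def vst : Fin 3 → Fin 3 → Fin 3 := ![![1,1,0],![2,2,0],![1,2,2]]
def phiv (i : Fin 3) : (Fin 3 → Fin 2) × Fin 8 → ℂ := vecOf (krausPow pf 3 (vst i))
def Pm (i : Fin 3) : Matrix ((Fin 3 → Fin 2) × Fin 8) ((Fin 3 → Fin 2) × Fin 8) ℂ :=
  vecMulVec (phiv i) (star (phiv i))

lemma phiv_orth (i j : Fin 3) : star (phiv i) ⬝ᵥ phiv j = if i = j then 1 else 0 := by
  unfold phiv
  rw [pairingVec, trace_krausPow_pair]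
  rw [Finset.prod_congr rfl (fun t _ => tau _ _)]
  fin_cases i <;> fin_cases j <;>
    simp [vst, Fin.prod_univ_three, cc_sq] <;> norm_num

lemma Pm_mul_Pm (i j : Fin 3) : Pm i * Pm j = if i = j then Pm i else 0 := by
  unfold Pm
  rw [_root_.vecMulVec_mul_vecMulVec, phiv_orth]
  by_cases h : i = j
  · subst h; rw [if_pos rfl, if_pos rfl, one_smul]
  · rw [if_neg h, if_neg h, zero_smul]

lemma Qidem : (∑ i : Fin 3, Pm i) * (∑ j : Fin 3, Pm j) = ∑ i : Fin 3, Pm i := by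
  rw [Finset.sum_mul_sum]
  simp [Pm_mul_Pm]

lemma P0_psd : (1 - ∑ i : Fin 3, Pm i).PosSemidef := by
  have hH : (1 - ∑ i : Fin 3, Pm i)ᴴ = 1 - ∑ i : Fin 3, Pm i := by
    rw [Matrix.conjTranspose_sub, Matrix.conjTranspose_one, Matrix.conjTranspose_sum]
    congr 1
    exact Finset.sum_congr rfl fun i _ => (vecMulVec_posSemidef (phiv i)).1
  have hI : (1 - ∑ i : Fin 3, Pm i) * (1 - ∑ i : Fin 3, Pm i) = 1 - ∑ i : Fin 3, Pm i := by
    rw [mul_sub, mul_one, sub_mul, one_mul, Qidem]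
    abel
  have h2 : (1 - ∑ i : Fin 3, Pm i) = (1 - ∑ i : Fin 3, Pm i)ᴴ * (1 - ∑ i : Fin 3, Pm i) := by
    rw [hH, hI]
  rw [h2]
  exact Matrix.posSemidef_conjTranspose_mul_self _

lemma bitFlipK_eq (p : ℝ) : bitFlipK p = fun k =>
    (((![Real.sqrt p, Real.sqrt (1-p)] : Fin 2 → ℝ) k : ℝ) : ℂ) •
      pf ((![0,1] : Fin 2 → Fin 3) k) := by
  funext k; fin_cases k <;> simp [bitFlipK, pf]

lemma phaseFlipK_eq (q : ℝ) : phaseFlipK q = fun k =>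
    (((![Real.sqrt q, Real.sqrt (1-q)] : Fin 2 → ℝ) k : ℝ) : ℂ) •
      pf ((![0,2] : Fin 2 → Fin 3) k) := by
  funext k; fin_cases k <;> simp [phaseFlipK, pf]

lemma mixedXZK_eq (s : ℝ) : mixedXZK s = fun k =>
    (((![Real.sqrt s, Real.sqrt (1-s)] : Fin 2 → ℝ) k : ℝ) : ℂ) •
      pf ((![1,2] : Fin 2 → Fin 3) k) := by
  funext k; fin_cases k <;> simp [mixedXZK, pf]

lemma off01 (q : ℝ) : (Pm 0 * outputPowOf (phaseFlipK q) 3 8 ψ0).trace = 0 := by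
  rw [phaseFlipK_eq q]
  unfold Pm phiv
  refine offdiag_zero _ _ _ 0 ?_
  intro k; fin_cases k <;> exact tau_ne (by decide)

lemma off02 (s : ℝ) : (Pm 0 * outputPowOf (mixedXZK s) 3 8 ψ0).trace = 0 := by
  rw [mixedXZK_eq s]
  unfold Pm phiv
  refine offdiag_zero _ _ _ 2 ?_
  intro k; fin_cases k <;> exact tau_ne (by decide)

lemma off10 (p : ℝ) : (Pm 1 * outputPowOf (bitFlipK p) 3 8 ψ0).trace = 0 := by
  rw [bitFlipK_eq p]
  unfold Pm phiv
  refine offdiag_zero _ _ _ 0 ?_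
  intro k; fin_cases k <;> exact tau_ne (by decide)

lemma off12 (s : ℝ) : (Pm 1 * outputPowOf (mixedXZK s) 3 8 ψ0).trace = 0 := by
  rw [mixedXZK_eq s]
  unfold Pm phiv
  refine offdiag_zero _ _ _ 2 ?_
  intro k; fin_cases k <;> exact tau_ne (by decide)

lemma off20 (p : ℝ) : (Pm 2 * outputPowOf (bitFlipK p) 3 8 ψ0).trace = 0 := by
  rw [bitFlipK_eq p]
  unfold Pm phiv
  refine offdiag_zero _ _ _ 1 ?_
  intro k; fin_cases k <;> exact tau_ne (by decide)

lemma off21 (q : ℝ) : (Pm 2 * outputPowOf (phaseFlipK q) 3 8 ψ0).trace = 0 := by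
  rw [phaseFlipK_eq q]
  unfold Pm phiv
  refine offdiag_zero _ _ _ 0 ?_
  intro k; fin_cases k <;> exact tau_ne (by decide)

lemma diag0 (p : ℝ) (hp0 : 0 < p) (hp1 : p < 1) :
    0 < (Pm 0 * outputPowOf (bitFlipK p) 3 8 ψ0).trace := by
  rw [bitFlipK_eq p]
  unfold Pm phiv
  refine diag_pos _ ?_ _ _ ![1,1,0] (by decide)
  intro k; fin_cases k <;> simp
  · exact hp0
  · linarith

lemma diag1 (q : ℝ) (hq0 : 0 < q) (hq1 : q < 1) :
    0 < (Pm 1 * outputPowOf (phaseFlipK q) 3 8 ψ0).trace := by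
  rw [phaseFlipK_eq q]
  unfold Pm phiv
  refine diag_pos _ ?_ _ _ ![1,1,0] (by decide)
  intro k; fin_cases k <;> simp
  · exact hq0
  · linarith

lemma diag2 (s : ℝ) (hs0 : 0 < s) (hs1 : s < 1) :
    0 < (Pm 2 * outputPowOf (mixedXZK s) 3 8 ψ0).trace := by
  rw [mixedXZK_eq s]
  unfold Pm phiv
  refine diag_pos _ ?_ _ _ ![0,1,1] (by decide)
  intro k; fin_cases k <;> simp
  · exact hs0
  · linarith

lemma not_span_le {m n : ℕ} (u : Fin m → Mat2) (v : Fin n → Mat2)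
    (L : Mat2 →ₗ[ℂ] ℂ) (hv : ∀ i, L (v i) = 0) (i0 : Fin m) (hu : L (u i0) ≠ 0) :
    ¬ Submodule.span ℂ (Set.range u) ≤ Submodule.span ℂ (Set.range v) := by
  intro h
  have h1 : Submodule.span ℂ (Set.range v) ≤ LinearMap.ker L := by
    rw [Submodule.span_le]; rintro _ ⟨i, rfl⟩; exact hv i
  exact hu (h1 (h (Submodule.subset_span ⟨i0, rfl⟩)))

def L01 : Mat2 →ₗ[ℂ] ℂ where
  toFun M := M 0 1
  map_add' := by intros; simp
  map_smul' := by intros; simp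
def Ldiff : Mat2 →ₗ[ℂ] ℂ where
  toFun M := M 0 0 - M 1 1
  map_add' := by intros; simp; ring
  map_smul' := by intros; simp; ring
def Lsum : Mat2 →ₗ[ℂ] ℂ where
  toFun M := M 0 0 + M 1 1
  map_add' := by intros; simp; ring
  map_smul' := by intros; simp; ring


end ThreePauliAux

/-- the supports of the three Pauli channels are pairwise non-contained
in one another, and consequently the channels can be unambiguously discriminated by
three uses. -/
theorem three_pauli_channels_unambig_three_uses (p q s : ℝ)
    (hp₀ : 0 < p) (hp₁ : p < 1) (hq₀ : 0 < q) (hq₁ : q < 1) (hs₀ : 0 < s) (hs₁ : s < 1) :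
    (¬ Submodule.span ℂ (Set.range (bitFlipK p)) ≤
        Submodule.span ℂ (Set.range (phaseFlipK q)) ∧
     ¬ Submodule.span ℂ (Set.range (phaseFlipK q)) ≤
        Submodule.span ℂ (Set.range (bitFlipK p)) ∧
     ¬ Submodule.span ℂ (Set.range (bitFlipK p)) ≤
        Submodule.span ℂ (Set.range (mixedXZK s)) ∧
     ¬ Submodule.span ℂ (Set.range (mixedXZK s)) ≤
        Submodule.span ℂ (Set.range (bitFlipK p)) ∧
     ¬ Submodule.span ℂ (Set.range (phaseFlipK q)) ≤
        Submodule.span ℂ (Set.range (mixedXZK s)) ∧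
     ¬ Submodule.span ℂ (Set.range (mixedXZK s)) ≤
        Submodule.span ℂ (Set.range (phaseFlipK q))) ∧
    ∃ da : ℕ, 0 < da ∧ ∃ ψ : (Fin 3 → Fin 2) × Fin da → ℂ, star ψ ⬝ᵥ ψ = 1 ∧
      UnambiguouslyDistinguishable
        ![outputPowOf (bitFlipK p) 3 da ψ, outputPowOf (phaseFlipK q) 3 da ψ,
          outputPowOf (mixedXZK s) 3 da ψ] := by
  have hp' : (0:ℝ) < 1 - p := by linarith
  have hq' : (0:ℝ) < 1 - q := by linarith
  have hs' : (0:ℝ) < 1 - s := by linarith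
  have h1 : ¬ Submodule.span ℂ (Set.range (bitFlipK p)) ≤
      Submodule.span ℂ (Set.range (phaseFlipK q)) := by
    refine not_span_le _ _ L01 ?_ 1 ?_
    · intro i; fin_cases i <;> simp [phaseFlipK, show ∀ M : Mat2, L01 M = M 0 1 from fun _ => rfl, pauliZ, Matrix.one_apply]
    · simp [bitFlipK, show ∀ M : Mat2, L01 M = M 0 1 from fun _ => rfl, pauliX]; exact Real.sqrt_ne_zero'.2 hp'
  have h2 : ¬ Submodule.span ℂ (Set.range (phaseFlipK q)) ≤
      Submodule.span ℂ (Set.range (bitFlipK p)) := by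
    refine not_span_le _ _ Ldiff ?_ 1 ?_
    · intro i; fin_cases i <;> simp [bitFlipK, Ldiff, pauliX, Matrix.one_apply]
    · simp [phaseFlipK, Ldiff, pauliZ]
      exact Real.sqrt_ne_zero'.2 hq'
  have h3 : ¬ Submodule.span ℂ (Set.range (bitFlipK p)) ≤
      Submodule.span ℂ (Set.range (mixedXZK s)) := by
    refine not_span_le _ _ Lsum ?_ 0 ?_
    · intro i; fin_cases i <;> simp [mixedXZK, Lsum, pauliX, pauliZ]
    · simp [bitFlipK, Lsum, Matrix.one_apply]
      exact Real.sqrt_ne_zero'.2 hp₀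
  have h4 : ¬ Submodule.span ℂ (Set.range (mixedXZK s)) ≤
      Submodule.span ℂ (Set.range (bitFlipK p)) := by
    refine not_span_le _ _ Ldiff ?_ 1 ?_
    · intro i; fin_cases i <;> simp [bitFlipK, Ldiff, pauliX, Matrix.one_apply]
    · simp [mixedXZK, Ldiff, pauliZ]
      exact Real.sqrt_ne_zero'.2 hs'
  have h5 : ¬ Submodule.span ℂ (Set.range (phaseFlipK q)) ≤
      Submodule.span ℂ (Set.range (mixedXZK s)) := by
    refine not_span_le _ _ Lsum ?_ 0 ?_
    · intro i; fin_cases i <;> simp [mixedXZK, Lsum, pauliX, pauliZ]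
    · simp [phaseFlipK, Lsum, Matrix.one_apply]
      exact Real.sqrt_ne_zero'.2 hq₀
  have h6 : ¬ Submodule.span ℂ (Set.range (mixedXZK s)) ≤
      Submodule.span ℂ (Set.range (phaseFlipK q)) := by
    refine not_span_le _ _ L01 ?_ 0 ?_
    · intro i; fin_cases i <;> simp [phaseFlipK, show ∀ M : Mat2, L01 M = M 0 1 from fun _ => rfl, pauliZ, Matrix.one_apply]
    · simp [mixedXZK, show ∀ M : Mat2, L01 M = M 0 1 from fun _ => rfl, pauliX]; exact Real.sqrt_ne_zero'.2 hs₀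
  refine ⟨⟨h1, h2, h3, h4, h5, h6⟩, 8, by norm_num, ψ0, psi0_norm,
    1 - ∑ i : Fin 3, Pm i, Pm, P0_psd, fun i => vecMulVec_posSemidef _, by abel, ?_, ?_⟩
  · intro i j hij
    fin_cases i <;> fin_cases j
    · exact absurd rfl hij
    · exact off01 q
    · exact off02 s
    · exact off10 p
    · exact absurd rfl hij
    · exact off12 s
    · exact off20 p
    · exact off21 q
    · exact absurd rfl hij
  · intro i
    fin_cases i
    · exact diag0 p hp₀ hp₁
    · exact diag1 q hq₀ hq₁
    · exact diag2 s hs₀ hs₁
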